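/- Let α, β, τ_R, a be nonzero reals, set c = -4τ_Rα/(5(α²+4β²)), b = -a, λ = 2τ_R²α(8α²+25β²)/(25(α²+4β²)²), ε = -44a²τ_R²α²β/(25(α²+4β²)²), γ = -8a²τ_R²α(4α²+5β²)/(25(α²+4β²)²), δ = a⁴τ_R²α²(α²+32β²)/(25β(α²+4β²)²). Suppose ρ : ℝ → ℝ is twice differentiable and satisfies ρ' = c(a-ρ)²(b-ρ). Then ρ satisfies ρ'' + ((αε-2βγ)/(τ_Rβ) - 4ατ_R/(α²+4β²)·ρ²)·ρ' + (δ/β - α²(αε-2βγ)²/(16τ_R²β⁴))·ρ + (2αγ+4βε)/(α²+4β²)·ρ³ + (2λ/α - 4τ_R²β²/(α²+4β²)²)·ρ⁵ = 0. -/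

import Mathlib

theorem stmt_7 (α β τ a c b lam eps gam del : ℝ)
    (hα : α ≠ 0) (hβ : β ≠ 0) (hτ : τ ≠ 0) (ha : a ≠ 0)
    (hc : c = -(4 * τ * α) / (5 * (α ^ 2 + 4 * β ^ 2)))
    (hb : b = -a)
    (hlam : lam = 2 * τ ^ 2 * α * (8 * α ^ 2 + 25 * β ^ 2) / (25 * (α ^ 2 + 4 * β ^ 2) ^ 2))
    (heps : eps = -(44 * a ^ 2 * τ ^ 2 * α ^ 2 * β) / (25 * (α ^ 2 + 4 * β ^ 2) ^ 2))
    (hgam : gam = -(8 * a ^ 2 * τ ^ 2 * α * (4 * α ^ 2 + 5 * β ^ 2)) / (25 * (α ^ 2 + 4 * β ^ 2) ^ 2))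
    (hdel : del = a ^ 4 * τ ^ 2 * α ^ 2 * (α ^ 2 + 32 * β ^ 2) / (25 * β * (α ^ 2 + 4 * β ^ 2) ^ 2))
    (ρ : ℝ → ℝ) (h1 : Differentiable ℝ ρ) (h2 : Differentiable ℝ (deriv ρ))
    (hode : ∀ ξ, deriv ρ ξ = c * (a - ρ ξ) ^ 2 * (b - ρ ξ)) :
    ∀ ξ, deriv (deriv ρ) ξ
      + ((α * eps - 2 * β * gam) / (τ * β) - 4 * α * τ / (α ^ 2 + 4 * β ^ 2) * (ρ ξ) ^ 2) * deriv ρ ξ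
      + (del / β - α ^ 2 * (α * eps - 2 * β * gam) ^ 2 / (16 * τ ^ 2 * β ^ 4)) * ρ ξ
      + (2 * α * gam + 4 * β * eps) / (α ^ 2 + 4 * β ^ 2) * (ρ ξ) ^ 3
      + (2 * lam / α - 4 * τ ^ 2 * β ^ 2 / (α ^ 2 + 4 * β ^ 2) ^ 2) * (ρ ξ) ^ 5 = 0 := by
  have hD : (α ^ 2 + 4 * β ^ 2) ≠ 0 := by positivity
  intro ξ
  -- compute second derivative
  have hρd : ∀ x, HasDerivAt ρ (c * (a - ρ x) ^ 2 * (b - ρ x)) x := by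
    intro x
    have := (h1 x).hasDerivAt
    rwa [hode x] at this
  have hcomp : HasDerivAt (fun x => c * (a - ρ x) ^ 2 * (b - ρ x))
      ((c * (2 * (a - ρ ξ) * (-(c * (a - ρ ξ) ^ 2 * (b - ρ ξ))))) * (b - ρ ξ)
        + c * (a - ρ ξ) ^ 2 * (-(c * (a - ρ ξ) ^ 2 * (b - ρ ξ)))) ξ := by
    have h := hρd ξ
    have h1' : HasDerivAt (fun x => c * (a - ρ x) ^ 2)
        (c * (2 * (a - ρ ξ) * (-(c * (a - ρ ξ) ^ 2 * (b - ρ ξ))))) ξ := by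
      have : HasDerivAt (fun x => (a - ρ x)) (-(c * (a - ρ ξ) ^ 2 * (b - ρ ξ))) ξ := by
        exact h.const_sub a
      have := (this.pow 2)
      simpa [mul_comm, mul_assoc, mul_left_comm] using this.const_mul c
    have h2' : HasDerivAt (fun x => (b - ρ x)) (-(c * (a - ρ ξ) ^ 2 * (b - ρ ξ))) ξ := by
      exact h.const_sub b
    exact h1'.mul h2'
  have hdd : deriv (deriv ρ) ξ
      = (c * (2 * (a - ρ ξ) * (-(c * (a - ρ ξ) ^ 2 * (b - ρ ξ))))) * (b - ρ ξ)
        + c * (a - ρ ξ) ^ 2 * (-(c * (a - ρ ξ) ^ 2 * (b - ρ ξ))) := by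
    have : deriv ρ = fun x => c * (a - ρ x) ^ 2 * (b - ρ x) := funext hode
    rw [this]
    exact hcomp.deriv
  rw [hdd, hode ξ]
  subst hc hb hlam heps hgam hdel
  field_simp
  ring
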